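/- Let n ≥ 0, let 0 = t₀ < t₁ < ⋯ < t_{2n} be real numbers, and let φ : ℝ → ℝ be the indicator function of the set (⋃_{j=0}^{n−1} [t_{2j}, t_{2j+1}]) ∪ [t_{2n}, ∞). Then for every t > t_{2n}: 8 ∫_0^t φ(τ) · Σ_{k=0}^∞ e^{−(2k+1)²π²(t−τ)} dτ = 8 · Σ_{k=0}^∞ (1/((2k+1)²π²)) · (1 − e^{−(2k+1)²π² t} · Σ_{j=0}^{2n} (−1)^j e^{(2k+1)²π² t_j}). -/

import Mathlib

open MeasureTheory Real Set


lemma phi_eq (n : ℕ) (t : ℕ → ℝ) (ht0 : t 0 = 0)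
    (hmono : ∀ i, i < 2 * n → t i < t (i + 1))
    (τ : ℝ) (hτ : ∀ j, j < 2*n+1 → τ ≠ t j) :
    Set.indicator
      ((⋃ j ∈ Finset.range n, Set.Icc (t (2 * j)) (t (2 * j + 1))) ∪
        Set.Ici (t (2 * n))) (fun _ => (1 : ℝ)) τ
    = ∑ j ∈ Finset.range (2*n+1), (-1:ℝ)^j * (Set.Ici (t j)).indicator (fun _ => (1:ℝ)) τ := by
  classical
  have hlt : ∀ j, j ≤ 2*n → ∀ i, i < j → t i < t j := by
    intro j hj
    induction j with
    | zero => omega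
    | succ m ih =>
      intro i hi
      rcases Nat.lt_succ_iff_lt_or_eq.mp hi with h | h
      · exact (ih (by omega) i h).trans (hmono m (by omega))
      · subst h; exact hmono i (by omega)
  have hle : ∀ i j, i ≤ j → j ≤ 2*n → t i ≤ t j := by
    intro i j hij hj
    rcases eq_or_lt_of_le hij with h | h
    · subst h; rfl
    · exact (hlt j hj i h).le
  have hrhs : ∑ j ∈ Finset.range (2*n+1), (-1:ℝ)^j * (Set.Ici (t j)).indicator (fun _ => (1:ℝ)) τ
      = ∑ j ∈ Finset.range (2*n+1), (if t j ≤ τ then (-1:ℝ)^j else 0) := by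
    apply Finset.sum_congr rfl
    intro j _
    by_cases h : t j ≤ τ
    · simp [Set.indicator_of_mem, h, Set.mem_Ici]
    · simp [Set.indicator_of_notMem, h, Set.mem_Ici]
  rw [hrhs]
  by_cases h0 : τ < 0
  · have h1 : ∀ j, j ≤ 2*n → ¬ (t j ≤ τ) := by
      intro j hj
      have : (0:ℝ) ≤ t j := ht0 ▸ hle 0 j (by omega) hj
      linarith
    rw [Finset.sum_eq_zero fun j hj =>
      if_neg (h1 j (Nat.lt_succ_iff.mp (Finset.mem_range.mp hj)))]
    rw [Set.indicator_of_notMem]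
    rintro (hmem | hmem)
    · simp only [Set.mem_iUnion, Finset.mem_range] at hmem
      obtain ⟨j, hjn, hj1, hj2⟩ := hmem
      have : (0:ℝ) ≤ t (2*j) := ht0 ▸ hle 0 (2*j) (by omega) (by omega)
      linarith
    · have : (0:ℝ) ≤ t (2*n) := ht0 ▸ hle 0 (2*n) (by omega) le_rfl
      simp only [Set.mem_Ici] at hmem; linarith
  push_neg at h0
  by_cases hbig : t (2*n) < τ
  · rw [Finset.sum_congr rfl (fun j hj => if_pos (by
        simp only [Finset.mem_range] at hj
        exact (hle j (2*n) (by omega) le_rfl).trans hbig.le))]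
    rw [neg_one_geom_sum, if_neg (by simp [Nat.even_add_one, Nat.even_mul])]
    rw [Set.indicator_of_mem (Set.mem_union_right _ (Set.mem_Ici.mpr hbig.le))]
  push_neg at hbig
  have h00 : t 0 < τ := lt_of_le_of_ne (ht0 ▸ h0) (Ne.symm (hτ 0 (by omega)))
  have hbig' : τ < t (2*n) := lt_of_le_of_ne hbig (hτ (2*n) (by omega))
  set i := Nat.findGreatest (fun m => t m < τ) (2*n) with hi
  have hPi : t i < τ := Nat.findGreatest_spec (P := fun m => t m < τ) (m := 0) (Nat.zero_le _) h00
  have hiub : i ≤ 2*n := Nat.findGreatest_le _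
  have hilt : i < 2*n := by
    rcases lt_or_eq_of_le hiub with h | h
    · exact h
    · exfalso; rw [h] at hPi; exact absurd hPi (not_lt.mpr hbig'.le)
  have hnext : τ < t (i+1) := by
    have h := Nat.findGreatest_is_greatest (P := fun m => t m < τ) (k := i+1) (lt_add_one i) (by omega)
    exact lt_of_le_of_ne (not_lt.mp h) (hτ (i+1) (by omega))
  have hiff : ∀ j, j ≤ 2*n → (t j ≤ τ ↔ j ≤ i) := by
    intro j hj
    constructor
    · intro h
      by_contra hc
      push_neg at hc
      have : t (i+1) ≤ t j := hle (i+1) j (by omega) hj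
      linarith
    · intro h
      exact (hle j i h hiub).trans hPi.le
  have hsum : (∑ j ∈ Finset.range (2*n+1), if t j ≤ τ then (-1:ℝ)^j else 0)
      = ∑ j ∈ Finset.range (i+1), (-1:ℝ)^j := by
    rw [← Finset.sum_subset (Finset.range_subset_range.mpr (show i+1 ≤ 2*n+1 by omega))]
    · apply Finset.sum_congr rfl
      intro j hj
      have hj' := Finset.mem_range.mp hj
      exact if_pos ((hiff j (by omega)).mpr (by omega))
    · intro j hjt hjs
      apply if_neg
      intro h
      have hj2n : j ≤ 2*n := Nat.lt_succ_iff.mp (Finset.mem_range.mp hjt)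
      exact hjs (Finset.mem_range.mpr (Nat.lt_succ_iff.mpr ((hiff j hj2n).mp h)))
  rw [hsum, neg_one_geom_sum]
  rcases Nat.even_or_odd i with ⟨m, hm⟩ | ⟨m, hm⟩
  · -- i = 2m even, φ = 1
    rw [if_neg (by rw [Nat.even_add_one, not_not]; exact ⟨m, hm⟩)]
    rw [Set.indicator_of_mem]
    apply Set.mem_union_left
    simp only [Set.mem_iUnion, Finset.mem_range]
    refine ⟨m, by omega, ?_, ?_⟩
    · have : t (2*m) = t i := by rw [hm]; ring_nf
      rw [this]; exact hPi.le
    · have : t (2*m+1) = t (i+1) := by rw [hm]; ring_nf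
      rw [this]; exact hnext.le
  · -- i = 2m+1 odd, φ = 0
    rw [if_pos ⟨m+1, by omega⟩, Set.indicator_of_notMem]
    · rintro (hmem | hmem)
      · simp only [Set.mem_iUnion, Finset.mem_range] at hmem
        obtain ⟨j, hjn, hj1, hj2⟩ := hmem
        by_cases hji : 2*j ≤ i
        · have h21 : 2*j+1 ≤ i := by omega
          have : t (2*j+1) ≤ t i := hle _ _ h21 hiub
          linarith
        · have : t (i+1) ≤ t (2*j) := hle _ _ (by omega) (by omega)
          linarith
      · simp only [Set.mem_Ici] at hmem
        linarith


lemma integral_exp_mul' (c a b : ℝ) (hc : c ≠ 0) :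
    ∫ x in a..b, Real.exp (c * x) = (Real.exp (c*b) - Real.exp (c*a))/c := by
  have D : ∀ x : ℝ, HasDerivAt (fun y : ℝ => Real.exp (c*y)/c) (Real.exp (c*x)) x := by
    intro x
    have := ((Real.hasDerivAt_exp (c*x)).comp x ((hasDerivAt_id x).const_mul c)).div_const c
    simpa [mul_comm, mul_div_assoc, mul_div_cancel_left₀ _ hc] using this
  rw [intervalIntegral.integral_eq_sub_of_hasDerivAt (fun x _ => D x)]
  · ring
  · exact (Real.continuous_exp.comp (continuous_const.mul continuous_id)).intervalIntegrable a b

lemma exp_part (c a s : ℝ) (hc : 0 < c) :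
    ∫ τ in a..s, Real.exp (-c * (s - τ)) = (1 - Real.exp (-c * (s - a))) / c := by
  have h : ∀ τ : ℝ, Real.exp (-c * (s - τ)) = Real.exp (c * τ) * Real.exp (-(c*s)) := by
    intro τ; rw [← Real.exp_add]; ring_nf
  simp_rw [h]
  rw [intervalIntegral.integral_mul_const, integral_exp_mul' c a s hc.ne']
  rw [div_mul_eq_mul_div, sub_mul, ← Real.exp_add, ← Real.exp_add]
  norm_num

-- set integral of Ici-indicator of our exponential
lemma ind_part (c a s : ℝ) (hc : 0 < c) (ha : 0 ≤ a) (has : a ≤ s) :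
    ∫ τ in Set.Ioc (0:ℝ) s, (Set.Ici a).indicator (fun τ' => Real.exp (-c * (s - τ'))) τ
      = (1 - Real.exp (-c * (s - a))) / c := by
  rw [MeasureTheory.integral_indicator measurableSet_Ici,
    MeasureTheory.Measure.restrict_restrict measurableSet_Ici]
  have hset : (Set.Ici a ∩ Set.Ioc 0 s : Set ℝ) =ᵐ[volume] (Set.Ioc a s : Set ℝ) := by
    rw [MeasureTheory.ae_eq_set]
    constructor
    · refine measure_mono_null (fun x hx => ?_) (measure_singleton a)
      obtain ⟨⟨hx1, hx2, hx3⟩, hx4⟩ := hx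
      simp only [Set.mem_Ici, Set.mem_Ioc, not_and, not_le, Set.mem_singleton_iff] at *
      rcases lt_or_eq_of_le hx1 with h | h
      · exact absurd (hx4 h) (not_lt.mpr hx3)
      · exact h.symm
    · refine measure_mono_null (fun x hx => ?_) measure_empty
      obtain ⟨⟨hx1, hx2⟩, hx3⟩ := hx
      exact absurd ⟨hx1.le, lt_of_le_of_lt ha hx1, hx2⟩ hx3
  rw [MeasureTheory.Measure.restrict_congr_set hset,
    ← intervalIntegral.integral_of_le has, exp_part c a s hc]


lemma t_le (n : ℕ) (t : ℕ → ℝ) (hmono : ∀ i, i < 2 * n → t i < t (i + 1)) :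
    ∀ i j, i ≤ j → j ≤ 2*n → t i ≤ t j := by
  have hlt : ∀ j, j ≤ 2*n → ∀ i, i < j → t i < t j := by
    intro j hj
    induction j with
    | zero => omega
    | succ m ih =>
      intro i hi
      rcases Nat.lt_succ_iff_lt_or_eq.mp hi with h | h
      · exact (ih (by omega) i h).trans (hmono m (by omega))
      · subst h; exact hmono i (by omega)
  intro i j hij hj
  rcases eq_or_lt_of_le hij with h | h
  · subst h; rfl
  · exact (hlt j hj i h).le

lemma per_k (n : ℕ) (t : ℕ → ℝ) (ht0 : t 0 = 0)
    (hmono : ∀ i, i < 2 * n → t i < t (i + 1)) (s : ℝ) (hs : t (2*n) < s)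
    (c : ℝ) (hc : 0 < c) :
    ∫ τ in Set.Ioc (0:ℝ) s,
      (Set.indicator ((⋃ j ∈ Finset.range n, Set.Icc (t (2 * j)) (t (2 * j + 1))) ∪
        Set.Ici (t (2 * n))) (fun _ => (1:ℝ)) τ) * Real.exp (-c * (s - τ))
    = (1/c) * (1 - Real.exp (-c*s) *
        ∑ j ∈ Finset.range (2*n+1), (-1:ℝ)^j * Real.exp (c * t j)) := by
  have hle := t_le n t hmono
  have htj0 : ∀ j, j ≤ 2*n → (0:ℝ) ≤ t j := fun j hj => ht0 ▸ hle 0 j (by omega) hj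
  have htjs : ∀ j, j ≤ 2*n → t j ≤ s := fun j hj => (hle j (2*n) hj le_rfl).trans hs.le
  have hfin : (⋃ j ∈ Finset.range (2*n+1), ({t j} : Set ℝ)).Finite :=
    Set.Finite.biUnion (Finset.range (2*n+1)).finite_toSet (fun _ _ => Set.finite_singleton _)
  have hnull : ∀ᵐ τ : ℝ, ∀ j, j < 2*n+1 → τ ≠ t j := by
    have h0 := hfin.measure_zero (μ := volume)
    rw [← MeasureTheory.compl_mem_ae_iff] at h0
    filter_upwards [h0] with τ hτ j hj h
    exact hτ (Set.mem_biUnion (Finset.mem_range.mpr hj) (by simp [h]))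
  have hae : (fun τ => (Set.indicator ((⋃ j ∈ Finset.range n, Set.Icc (t (2 * j)) (t (2 * j + 1))) ∪
        Set.Ici (t (2 * n))) (fun _ => (1:ℝ)) τ) * Real.exp (-c * (s - τ)))
      =ᵐ[volume.restrict (Set.Ioc (0:ℝ) s)]
      (fun τ => ∑ j ∈ Finset.range (2*n+1),
        (-1:ℝ)^j * (Set.Ici (t j)).indicator (fun τ' => Real.exp (-c * (s - τ'))) τ) := by
    apply MeasureTheory.ae_restrict_of_ae
    filter_upwards [hnull] with τ hτ
    rw [phi_eq n t ht0 hmono τ hτ, Finset.sum_mul]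
    refine Finset.sum_congr rfl fun j _ => ?_
    rw [mul_assoc]
    congr 1
    by_cases h : τ ∈ Set.Ici (t j)
    · rw [Set.indicator_of_mem h, Set.indicator_of_mem h, one_mul]
    · rw [Set.indicator_of_notMem h, Set.indicator_of_notMem h, zero_mul]
  rw [MeasureTheory.integral_congr_ae hae]
  have hintg : ∀ j : ℕ, MeasureTheory.Integrable
      (fun τ => (Set.Ici (t j)).indicator (fun τ' => Real.exp (-c * (s - τ'))) τ)
      (volume.restrict (Set.Ioc (0:ℝ) s)) := by
    intro j
    exact ((Real.continuous_exp.comp (by continuity)).integrableOn_Ioc).indicator measurableSet_Ici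
  rw [MeasureTheory.integral_finset_sum _ (fun j _ => (hintg j).const_mul _)]
  have : ∀ j ∈ Finset.range (2*n+1),
      (∫ τ in Set.Ioc (0:ℝ) s, (-1:ℝ)^j * (Set.Ici (t j)).indicator (fun τ' => Real.exp (-c * (s - τ'))) τ)
      = (-1:ℝ)^j * ((1 - Real.exp (-c * (s - t j))) / c) := by
    intro j hj
    rw [MeasureTheory.integral_const_mul,
      ind_part c (t j) s hc (htj0 j (by simp at hj; omega)) (htjs j (by simp at hj; omega))]
  rw [Finset.sum_congr rfl this]
  calc ∑ j ∈ Finset.range (2*n+1), (-1:ℝ)^j * ((1 - Real.exp (-c * (s - t j))) / c)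
      = ∑ j ∈ Finset.range (2*n+1),
          ((-1:ℝ)^j / c - (Real.exp (-c*s)/c) * ((-1:ℝ)^j * Real.exp (c * t j))) := by
        refine Finset.sum_congr rfl fun j _ => ?_
        rw [show -c*(s - t j) = -c*s + c * t j by ring, Real.exp_add]; ring
    _ = (1/c) * (1 - Real.exp (-c*s) *
          ∑ j ∈ Finset.range (2*n+1), (-1:ℝ)^j * Real.exp (c * t j)) := by
        rw [Finset.sum_sub_distrib, ← Finset.sum_div, neg_one_geom_sum,
          if_neg (by simp [Nat.even_add_one, Nat.even_mul]), ← Finset.mul_sum]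
        ring


/-- With `φ` the indicator of `(⋃_{j=0}^{n-1} [t_{2j}, t_{2j+1}]) ∪ [t_{2n}, ∞)`, the integral
representation `8 ∫_0^t φ(τ) ∑_k e^{-(2k+1)²π²(t-τ)} dτ` of the total mass equals the series
`8 ∑_k (1/((2k+1)²π²)) (1 - e^{-(2k+1)²π² t} ∑_{j=0}^{2n} (-1)^j e^{(2k+1)²π² t_j})`
for all `t > t_{2n}`. -/

-- summability of 1/c_k
lemma summable_inv_ck : Summable (fun k : ℕ => 1 / ((2*(k:ℝ)+1)^2 * Real.pi^2)) := by
  have h1 : Summable (fun k : ℕ => 1/((k:ℝ)+1)^2) := by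
    have h := (Real.summable_one_div_nat_pow (p := 2)).mpr (by norm_num)
    have h2 := (summable_nat_add_iff 1).mpr h
    convert h2 using 2 with k
    · rfl
    · push_cast; ring
  refine Summable.of_nonneg_of_le (fun k => by positivity) (fun k => ?_) (h1.mul_left (1/Real.pi^2))
  calc 1 / ((2*(k:ℝ)+1)^2 * Real.pi^2) ≤ 1 / (((k:ℝ)+1)^2 * Real.pi^2) := by
        apply one_div_le_one_div_of_le (by positivity)
        apply mul_le_mul_of_nonneg_right _ (sq_nonneg _)
        have hk : (0:ℝ) ≤ (k:ℝ) := Nat.cast_nonneg k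
        nlinarith
    _ = (1/Real.pi^2) * (1/((k:ℝ)+1)^2) := by
        rw [← one_div_mul_one_div]; ring

theorem mass_integral_eq_series_on (n : ℕ) (t : ℕ → ℝ) (ht0 : t 0 = 0)
    (hmono : ∀ i, i < 2 * n → t i < t (i + 1))
    (φ : ℝ → ℝ)
    (hφ : φ = Set.indicator
      ((⋃ j ∈ Finset.range n, Set.Icc (t (2 * j)) (t (2 * j + 1))) ∪
        Set.Ici (t (2 * n))) (fun _ => (1 : ℝ))) :
    ∀ s : ℝ, t (2 * n) < s →
      8 * ∫ τ in (0 : ℝ)..s, φ τ *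
          ∑' k : ℕ, Real.exp (-((2 * (k : ℝ) + 1) ^ 2 * Real.pi ^ 2) * (s - τ)) =
      8 * ∑' k : ℕ, (1 / ((2 * (k : ℝ) + 1) ^ 2 * Real.pi ^ 2)) *
        (1 - Real.exp (-((2 * (k : ℝ) + 1) ^ 2 * Real.pi ^ 2) * s) *
          ∑ j ∈ Finset.range (2 * n + 1), (-1 : ℝ) ^ j *
            Real.exp (((2 * (k : ℝ) + 1) ^ 2 * Real.pi ^ 2) * t j)) := by
  intro s hs
  set c : ℕ → ℝ := fun k => (2*(k:ℝ)+1)^2 * Real.pi^2 with hcdef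
  have hc : ∀ k, 0 < c k := fun k => by positivity
  have hle := t_le n t hmono
  have hs0 : (0:ℝ) < s := lt_of_le_of_lt (ht0 ▸ hle 0 (2*n) (by omega) le_rfl) hs
  -- φ properties
  have hφm : Measurable φ := by
    rw [hφ]
    exact Measurable.indicator measurable_const
      ((Finset.measurableSet_biUnion _ (fun j _ => measurableSet_Icc)).union measurableSet_Ici)
  have hφ0 : ∀ τ, 0 ≤ φ τ := by
    intro τ; rw [hφ]; exact Set.indicator_nonneg (fun _ _ => zero_le_one) τ
  have hφ1 : ∀ τ, φ τ ≤ 1 := by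
    intro τ; rw [hφ]
    by_cases h : τ ∈ ((⋃ j ∈ Finset.range n, Set.Icc (t (2 * j)) (t (2 * j + 1))) ∪
        Set.Ici (t (2 * n)))
    · rw [Set.indicator_of_mem h]
    · rw [Set.indicator_of_notMem h]; norm_num
  set f : ℕ → ℝ → ℝ := fun k τ => φ τ * Real.exp (-(c k) * (s - τ)) with hfdef
  have hfm : ∀ k, AEStronglyMeasurable (f k) (volume.restrict (Set.Ioc (0:ℝ) s)) := by
    intro k
    exact ((hφm.mul (by fun_prop)).aestronglyMeasurable)
  have hfint : ∀ k, MeasureTheory.Integrable (f k) (volume.restrict (Set.Ioc (0:ℝ) s)) := by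
    intro k
    refine MeasureTheory.Integrable.mono' (integrable_const 1) (hfm k) ?_
    filter_upwards [MeasureTheory.ae_restrict_mem measurableSet_Ioc] with τ hτ
    rw [Real.norm_eq_abs, abs_of_nonneg (mul_nonneg (hφ0 τ) (Real.exp_nonneg _))]
    calc φ τ * Real.exp (-(c k) * (s - τ)) ≤ 1 * 1 := by
          apply mul_le_mul (hφ1 τ) _ (Real.exp_nonneg _) zero_le_one
          rw [Real.exp_le_one_iff]
          nlinarith [hc k, hτ.2]
      _ = 1 := one_mul 1
  have hval : ∀ k, ∫ τ in Set.Ioc (0:ℝ) s, f k τ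
      = (1/(c k)) * (1 - Real.exp (-(c k)*s) *
          ∑ j ∈ Finset.range (2*n+1), (-1:ℝ)^j * Real.exp ((c k) * t j)) := by
    intro k
    rw [hfdef]
    simp only [hφ]
    exact per_k n t ht0 hmono s hs (c k) (hc k)
  have hnn : ∀ k, 0 ≤ ∫ τ in Set.Ioc (0:ℝ) s, f k τ := by
    intro k
    exact MeasureTheory.setIntegral_nonneg measurableSet_Ioc
      (fun τ _ => mul_nonneg (hφ0 τ) (Real.exp_nonneg _))
  have hub : ∀ k, (∫ τ in Set.Ioc (0:ℝ) s, f k τ) ≤ 1 / (c k) := by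
    intro k
    have hmono' : (∫ τ in Set.Ioc (0:ℝ) s, f k τ)
        ≤ ∫ τ in Set.Ioc (0:ℝ) s, Real.exp (-(c k) * (s - τ)) := by
      refine MeasureTheory.setIntegral_mono_on (hfint k)
        ((Real.continuous_exp.comp (by fun_prop)).integrableOn_Ioc) measurableSet_Ioc ?_
      intro τ _
      calc f k τ ≤ 1 * Real.exp (-(c k) * (s - τ)) :=
            mul_le_mul_of_nonneg_right (hφ1 τ) (Real.exp_nonneg _)
        _ = _ := one_mul _
    have : ∫ τ in Set.Ioc (0:ℝ) s, Real.exp (-(c k) * (s - τ))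
        = (1 - Real.exp (-(c k) * (s - 0))) / (c k) := by
      rw [← intervalIntegral.integral_of_le hs0.le, exp_part _ _ _ (hc k)]
    rw [this] at hmono'
    refine hmono'.trans ?_
    rw [one_div]
    rw [div_le_iff₀ (hc k)]
    have := Real.exp_nonneg (-(c k) * (s - 0))
    rw [inv_mul_cancel₀ (hc k).ne']
    linarith
  have hsum : Summable (fun k => ∫ τ in Set.Ioc (0:ℝ) s, f k τ) :=
    Summable.of_nonneg_of_le hnn hub summable_inv_ck
  rw [intervalIntegral.integral_of_le hs0.le]
  have hswap : (∫ τ in Set.Ioc (0:ℝ) s, φ τ * ∑' k : ℕ, Real.exp (-(c k) * (s - τ)))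
      = ∑' k, ∫ τ in Set.Ioc (0:ℝ) s, f k τ := by
    rw [show (fun τ => φ τ * ∑' k : ℕ, Real.exp (-(c k) * (s - τ)))
        = fun τ => ∑' k, f k τ from funext fun τ => tsum_mul_left.symm]
    apply MeasureTheory.integral_tsum hfm
    have heq : ∀ k, ∫⁻ τ in Set.Ioc (0:ℝ) s, ‖f k τ‖ₑ
        = ENNReal.ofReal (∫ τ in Set.Ioc (0:ℝ) s, f k τ) := by
      intro k
      rw [MeasureTheory.ofReal_integral_eq_lintegral_ofReal (hfint k)
        (Filter.Eventually.of_forall fun τ => mul_nonneg (hφ0 τ) (Real.exp_nonneg _))]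
      exact lintegral_congr fun τ =>
        (Real.enorm_eq_ofReal (mul_nonneg (hφ0 τ) (Real.exp_nonneg _)))
    simp_rw [heq]
    rw [← ENNReal.ofReal_tsum_of_nonneg hnn hsum]
    exact ENNReal.ofReal_ne_top
  rw [hswap]
  congr 1
  exact tsum_congr fun k => hval k
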